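/- The function G₄(ρ, v, m) := −(v + m) · (v − (0, 1−ρ)) + |v + m|²/2 is Λ-convex and vanishes on K. -/
import Mathlib


open MeasureTheory

noncomputable section

/-- Euclidean dot product on ℝ². -/
def dot (a b : ℝ × ℝ) : ℝ := a.1 * b.1 + a.2 * b.2

/-- Rotation by 90°: (a,b)⊥ = (−b, a). -/
def perp (a : ℝ × ℝ) : ℝ × ℝ := (-a.2, a.1)

/-- Euclidean norm on ℝ². -/
def nrm (a : ℝ × ℝ) : ℝ := Real.sqrt (a.1 ^ 2 + a.2 ^ 2)

/-- State space ℝ × ℝ² × ℝ² of (ρ, v, m). -/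
abbrev Pt := ℝ × (ℝ × ℝ) × (ℝ × ℝ)

/-- The wave cone Λ of stationary IPM. -/
def Lam : Set Pt :=
  {z | dot z.2.1 z.2.1 + z.1 * z.2.1.2 = 0 ∧ dot z.2.2 (perp z.2.1) = 0 ∧
       dot z.2.2 (z.2.1 + (0, z.1)) = 0}

/-- The constitutive set K. -/
def Kset : Set Pt := {z | |z.1| = 1 ∧ z.2.2 = z.1 • z.2.1}

def G2 (z : Pt) : ℝ := dot z.2.2 (perp z.2.1)

def G3 (z : Pt) : ℝ :=
  -dot (z.2.1 - z.2.2) (z.2.1 + (0, 1 + z.1)) + dot (z.2.1 - z.2.2) (z.2.1 - z.2.2) / 2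

def G4 (z : Pt) : ℝ :=
  -dot (z.2.1 + z.2.2) (z.2.1 - (0, 1 - z.1)) + dot (z.2.1 + z.2.2) (z.2.1 + z.2.2) / 2


lemma quadConvex (a b c : ℝ) (ha : 0 ≤ a) :
    ConvexOn ℝ Set.univ (fun t : ℝ => a * t ^ 2 + b * t + c) := by
  refine ⟨convex_univ, ?_⟩
  intro x _ y _ α β hα hβ hαβ
  simp only [smul_eq_mul]
  have hβ' : β = 1 - α := by linarith
  subst hβ'
  nlinarith [mul_nonneg (mul_nonneg (mul_nonneg ha hα) hβ) (sq_nonneg (x - y))]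

theorem stmt5 :
    (∀ z₀ : Pt, ∀ z ∈ Lam, ConvexOn ℝ Set.univ (fun t : ℝ => G4 (z₀ + t • z))) ∧
    (∀ z ∈ Kset, G4 z = 0) := by
  constructor
  · rintro ⟨p, ⟨v1, v2⟩, mm1, mm2⟩ ⟨q, ⟨w1, w2⟩, n1, n2⟩ ⟨h1, h2, h3⟩
    simp only [Lam, Set.mem_setOf_eq, dot, perp, Prod.mk_add_mk] at h1 h2 h3
    set a : ℝ := ((w1 + n1) ^ 2 + (w2 + n2) ^ 2) / 2 with ha_def
    set b : ℝ := -((v1 + mm1) * w1 + (v2 + mm2) * (w2 + q))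
      - ((w1 + n1) * v1 + (w2 + n2) * (v2 + p - 1))
      + ((v1 + mm1) * (w1 + n1) + (v2 + mm2) * (w2 + n2)) with hb_def
    set c : ℝ := -((v1 + mm1) * v1 + (v2 + mm2) * (v2 + p - 1))
      + ((v1 + mm1) ^ 2 + (v2 + mm2) ^ 2) / 2 with hc_def
    have key : (fun t : ℝ => G4 ((p, (v1, v2), mm1, mm2) + t • (q, (w1, w2), n1, n2)))
        = fun t : ℝ => a * t ^ 2 + b * t + c := by
      funext t
      simp only [G4, dot, Prod.mk_add_mk, Prod.mk_sub_mk, Prod.smul_mk, smul_eq_mul]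
      simp only [a, b, c]
      linear_combination (-(t ^ 2)) * h1 + (-(t ^ 2)) * h3
    rw [key]
    apply quadConvex
    positivity
  · rintro ⟨p, ⟨v1, v2⟩, mm1, mm2⟩ ⟨hp, hm⟩
    simp only [Prod.smul_mk, smul_eq_mul, Prod.mk.injEq, Prod.ext_iff] at hm
    rcases abs_eq (by norm_num : (0:ℝ) ≤ 1) |>.mp hp with h | h <;>
      simp only [G4, dot] at * <;>
      obtain ⟨hm1, hm2⟩ := hm <;> subst h <;> simp_all <;> ring
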